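/- For t ≥ 5, the equitable dominator chromatic number of the complement of the helm graph H_{1,t,t} equals t + 1. -/

import Mathlib

open SimpleGraph Finset

/-- A coloring `c` of the vertices of `G` with exactly `k` colors is an
*equitable dominator coloring* if it is proper, every vertex dominates some
color class (every vertex of that class lies in its closed neighborhood),
and any two color classes differ in size by at most one. -/
def IsEquitableDominatorColoring {V : Type*} [Fintype V] (G : SimpleGraph V)
    (k : ℕ) (c : V → Fin k) : Prop :=
  Function.Surjective c ∧
  (∀ ⦃u v : V⦄, G.Adj u v → c u ≠ c v) ∧
  (∀ v : V, ∃ i : Fin k, ∀ u : V, c u = i → u = v ∨ G.Adj v u) ∧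
  (∀ i j : Fin k,
    (Finset.univ.filter fun v => c v = i).card ≤
      (Finset.univ.filter fun v => c v = j).card + 1)

/-- The equitable dominator chromatic number `χ_ed`. -/
noncomputable def edChromaticNumber {V : Type*} [Fintype V] (G : SimpleGraph V) : ℕ :=
  sInf {k | ∃ c : V → Fin k, IsEquitableDominatorColoring G k c}

/-- The wheel `W_{1,t}`: a cycle on `t` vertices together with a hub (`none`)
adjacent to all cycle vertices. -/
def wheel (t : ℕ) : SimpleGraph (Option (Fin t)) :=
  SimpleGraph.fromRel (fun x y =>
    x = none ∨ y = none ∨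
    (∃ i j : Fin t, x = some i ∧ y = some j ∧ (SimpleGraph.cycleGraph t).Adj i j))

/-- The helm `H_{1,t,t}`: the wheel `W_{1,t}` together with a pendant vertex
attached to each of the `t` cycle vertices. -/
def helm (t : ℕ) : SimpleGraph (Option (Fin t) ⊕ Fin t) :=
  SimpleGraph.fromRel (fun x y =>
    (∃ u v : Option (Fin t), x = Sum.inl u ∧ y = Sum.inl v ∧ (wheel t).Adj u v) ∨
    (∃ i : Fin t, x = Sum.inl (some i) ∧ y = Sum.inr i))

lemma helm_adj_some_inr (t : ℕ) (i j : Fin t) :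
    (helm t).Adj (Sum.inl (some i)) (Sum.inr j) ↔ i = j := by
  simp [helm, fromRel_adj, eq_comm]

lemma helm_not_adj_inr_none (t : ℕ) (i : Fin t) :
    ¬ (helm t).Adj (Sum.inr i) (Sum.inl none) := by
  simp [helm, fromRel_adj]

lemma helm_not_adj_inr_inr (t : ℕ) (i j : Fin t) :
    ¬ (helm t).Adj (Sum.inr i) (Sum.inr j) := by
  simp [helm, fromRel_adj]

lemma helm_adj_some_some (t : ℕ) (i j : Fin t) :
    (helm t).Adj (Sum.inl (some i)) (Sum.inl (some j)) ↔
      i ≠ j ∧ (SimpleGraph.cycleGraph t).Adj i j := by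
  have h := (SimpleGraph.cycleGraph t).adj_comm i j
  simp only [helm, wheel, fromRel_adj]
  constructor
  · rintro ⟨hne, h1 | h1⟩ <;> simp_all
  · rintro ⟨hne, hadj⟩
    exact ⟨by simpa using hne, Or.inl (Or.inl ⟨some i, some j, rfl, rfl, by simpa using hne,
      Or.inl (Or.inr (Or.inr ⟨i, j, rfl, rfl, hadj⟩))⟩)⟩

lemma val3 (n : ℕ) : ((3 : Fin (n+5)) : ℕ) = 3 := by
  rw [show (3:Fin (n+5)) = 2 + 1 by ext; simp [Fin.val_add], Fin.val_add, Fin.val_two, Fin.val_one,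
    Nat.mod_eq_of_lt (by omega)]

open Fin.CommRing in
lemma ne_add_two (n : ℕ) (i : Fin (n+5)) : i ≠ i + 2 := by
  intro h
  have h2 : (2 : Fin (n+5)) = 0 := by linear_combination -h
  have := congrArg Fin.val h2
  simp [Nat.mod_eq_of_lt (show 2 < n+5 by omega)] at this

open Fin.CommRing in
lemma cycle_not_adj_add_two (n : ℕ) (i : Fin (n+5)) :
    ¬ (SimpleGraph.cycleGraph (n+5)).Adj i (i+2) := by
  intro hadj
  rcases cycleGraph_adj.mp hadj with h | h
  · have h3 : (3:Fin (n+5)) = 0 := by linear_combination -h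
    have := congrArg Fin.val h3
    rw [val3] at this
    simp at this
  · have h2 : (2:Fin (n+5)) = 1 := by linear_combination h
    have := congrArg Fin.val h2
    simp [Nat.mod_eq_of_lt (show 2 < n+5 by omega)] at this

/-- The optimal coloring: pair the `i`-th cycle vertex with the `i`-th pendant,
and give the hub its own color. -/
def hcol (t : ℕ) : Option (Fin t) ⊕ Fin t → Fin (t+1)
  | Sum.inl none => Fin.last t
  | Sum.inl (some i) => i.castSucc
  | Sum.inr i => i.castSucc

lemma hcol_filter_last (t : ℕ) :
    (Finset.univ.filter fun v => hcol t v = Fin.last t) = {Sum.inl none} := by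
  ext v
  simp only [Finset.mem_filter, Finset.mem_univ, true_and]
  rcases v with (_|i)|i <;>
    simp [hcol, (Fin.castSucc_lt_last _).ne]

lemma hcol_filter_castSucc (t : ℕ) (j : Fin t) :
    (Finset.univ.filter fun v => hcol t v = j.castSucc) =
      {Sum.inl (some j), Sum.inr j} := by
  ext v
  rcases v with (_|i)|i <;>
    simp [hcol, (Fin.castSucc_lt_last _).ne, (Fin.castSucc_lt_last _).ne',
      Fin.castSucc_inj, eq_comm]

lemma hcol_good (n : ℕ) :
    IsEquitableDominatorColoring (helm (n+5))ᶜ (n+5+1) (hcol (n+5)) := by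
  set t := n + 5 with ht
  refine ⟨?_, ?_, ?_, ?_⟩
  · -- surjective
    intro i
    induction i using Fin.lastCases with
    | last => exact ⟨Sum.inl none, rfl⟩
    | cast j => exact ⟨Sum.inr j, rfl⟩
  · -- proper
    intro u v hadj
    rw [compl_adj] at hadj
    obtain ⟨hne, hnadj⟩ := hadj
    rcases u with (_|i)|i <;> rcases v with (_|j)|j <;>
      simp only [hcol]
    · exact absurd rfl hne
    · exact (Fin.castSucc_lt_last j).ne'
    · exact (Fin.castSucc_lt_last j).ne'
    · exact (Fin.castSucc_lt_last i).ne
    · intro h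
      exact hne (by rw [Fin.castSucc_inj.mp h])
    · intro h
      exact hnadj ((helm_adj_some_inr t i j).2 (Fin.castSucc_inj.mp h))
    · exact (Fin.castSucc_lt_last i).ne
    · intro h
      exact hnadj (((helm_adj_some_inr t j i).2 (Fin.castSucc_inj.mp h).symm).symm)
    · intro h
      exact hne (by rw [Fin.castSucc_inj.mp h])
  · -- dominator
    intro v
    rcases v with (_|i)|i
    · refine ⟨Fin.last t, fun u hu => ?_⟩
      left
      rcases u with (_|j)|j
      · rfl
      · exact absurd hu (Fin.castSucc_lt_last j).ne
      · exact absurd hu (Fin.castSucc_lt_last j).ne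
    · refine ⟨(i+2).castSucc, fun u hu => ?_⟩
      right
      rcases u with (_|j)|j
      · exact absurd hu (Fin.castSucc_lt_last _).ne'
      · have hj : j = i + 2 := Fin.castSucc_inj.mp hu
        subst hj
        rw [compl_adj]
        refine ⟨by simpa using (ne_add_two n i), ?_⟩
        rw [helm_adj_some_some]
        rintro ⟨-, hc⟩
        exact cycle_not_adj_add_two n i hc
      · have hj : j = i + 2 := Fin.castSucc_inj.mp hu
        subst hj
        rw [compl_adj]
        refine ⟨by simp, ?_⟩
        rw [helm_adj_some_inr]
        exact ne_add_two n i
    · refine ⟨Fin.last t, fun u hu => ?_⟩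
      right
      rcases u with (_|j)|j
      · rw [compl_adj]
        exact ⟨by simp, helm_not_adj_inr_none t i⟩
      · exact absurd hu (Fin.castSucc_lt_last j).ne
      · exact absurd hu (Fin.castSucc_lt_last j).ne
  · -- equitable
    have hcard : ∀ i : Fin (t+1),
        (Finset.univ.filter fun v => hcol t v = i).card = 1 ∨
        (Finset.univ.filter fun v => hcol t v = i).card = 2 := by
      intro i
      induction i using Fin.lastCases with
      | last => left; rw [hcol_filter_last]; simp
      | cast j =>
          right
          rw [hcol_filter_castSucc]
          rw [Finset.card_pair (by simp)]
    intro i j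
    rcases hcard i with h | h <;> rcases hcard j with h' | h' <;> omega

lemma helm_lower (t k : ℕ) (c : Option (Fin t) ⊕ Fin t → Fin k)
    (h : IsEquitableDominatorColoring (helm t)ᶜ k c) : t + 1 ≤ k := by
  obtain ⟨-, hproper, -, -⟩ := h
  set g : Option (Fin t) → Option (Fin t) ⊕ Fin t :=
    fun o => Option.casesOn o (Sum.inl none) Sum.inr with hg
  have hinj : Function.Injective (c ∘ g) := by
    intro a b hab
    by_contra hne
    have hadj : (helm t)ᶜ.Adj (g a) (g b) := by
      rw [compl_adj]
      rcases a with _|i <;> rcases b with _|j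
      · exact absurd rfl hne
      · exact ⟨by simp [hg], fun h' => helm_not_adj_inr_none t j h'.symm⟩
      · exact ⟨by simp [hg], helm_not_adj_inr_none t i⟩
      · exact ⟨fun h => hne (congrArg some (Sum.inr_injective h)),
          helm_not_adj_inr_inr t i j⟩
    exact hproper hadj hab
  have := Fintype.card_le_of_injective _ hinj
  simpa using this

theorem edChromaticNumber_compl_helm (t : ℕ) (ht : 5 ≤ t) :
    edChromaticNumber (helm t)ᶜ = t + 1 := by
  obtain ⟨n, rfl⟩ : ∃ n, t = n + 5 := ⟨t - 5, by omega⟩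
  apply le_antisymm
  · exact Nat.sInf_le ⟨hcol (n+5), hcol_good n⟩
  · exact le_csInf ⟨n+5+1, hcol (n+5), hcol_good n⟩
      (fun k ⟨c, hc⟩ => helm_lower (n+5) k c hc)
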